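/- Let c be a valid partial coloring of a bipartite edge-group instance (c is defined on a subset S of the edges and any two distinct colored edges sharing an endpoint and lying in different groups have different colors), let k ≥ 1 be an integer, and let g be a group centered at input u none of whose edges is colored. Suppose that every group centered at u other than g uses at most k distinct colors under c, and that the total number C of distinct colors used by c satisfies C > (D_i − 1)·k + (Δ_o − 1)·n_o^{1/k}. Then c can be extended to a valid partial coloring of S together with the edges of g in which every edge of g receives a color already used by c and at most k distinct colors appear on the edges of g. -/

import Mathlib

lemma descFac_ineq (k : ℕ) : ∀ {d a : ℕ}, d ≤ a →
    d.descFactorial k * a ^ k ≤ a.descFactorial k * d ^ k := by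
  induction k with
  | zero => simp
  | succ k ih =>
    intro d a h
    rw [Nat.descFactorial_succ, Nat.descFactorial_succ, pow_succ, pow_succ]
    have h1 : (d - k) * a ≤ (a - k) * d := by
      rcases le_or_gt d k with hdk | hdk
      · simp [Nat.sub_eq_zero_of_le hdk]
      · rw [Nat.sub_mul, Nat.sub_mul]
        have h2 : k * d ≤ k * a := Nat.mul_le_mul_left _ h
        have h3 : k * a ≤ d * a := Nat.mul_le_mul_right _ (le_of_lt hdk)
        have h5 : d * a = a * d := mul_comm d a
        omega
    calc (d - k) * d.descFactorial k * (a ^ k * a)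
        = ((d - k) * a) * (d.descFactorial k * a ^ k) := by ring
      _ ≤ ((a - k) * d) * (a.descFactorial k * d ^ k) := Nat.mul_le_mul h1 (ih h)
      _ = (a - k) * a.descFactorial k * (d ^ k * d) := by ring

lemma choose_ineq {d a : ℕ} (k : ℕ) (h : d ≤ a) :
    d.choose k * a ^ k ≤ a.choose k * d ^ k := by
  have key := descFac_ineq k h
  rw [Nat.descFactorial_eq_factorial_mul_choose, Nat.descFactorial_eq_factorial_mul_choose] at key
  have hf : 0 < Nat.factorial k := Nat.factorial_pos k
  have : Nat.factorial k * (d.choose k * a ^ k) ≤ Nat.factorial k * (a.choose k * d ^ k) := by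
    calc Nat.factorial k * (d.choose k * a ^ k) = Nat.factorial k * d.choose k * a ^ k := by ring
      _ ≤ Nat.factorial k * a.choose k * d ^ k := key
      _ = Nat.factorial k * (a.choose k * d ^ k) := by ring
  exact Nat.le_of_mul_le_mul_left this hf

lemma count_ineq {a d n k : ℕ} (hk : 1 ≤ k) (hka : k ≤ a) (hn : 1 ≤ n)
    (h : (d:ℝ) * (n:ℝ) ^ (1/(k:ℝ)) < a) : n * d.choose k < a.choose k := by
  have hkR : (k:ℝ) ≠ 0 := by positivity
  have hn1 : (1:ℝ) ≤ (n:ℝ) ^ (1/(k:ℝ)) :=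
    Real.one_le_rpow (by exact_mod_cast hn) (by positivity)
  have hchoosea : 0 < a.choose k := Nat.choose_pos hka
  rcases lt_or_ge d k with hdk | hdk
  · rw [Nat.choose_eq_zero_of_lt hdk]
    simpa using hchoosea
  · -- k ≤ d, so d ≥ 1
    have hda : d < a := by
      have : (d:ℝ) ≤ (d:ℝ) * (n:ℝ) ^ (1/(k:ℝ)) := by
        nlinarith [Nat.cast_nonneg (α := ℝ) d]
      exact_mod_cast lt_of_le_of_lt this h
    have hpow : (d:ℝ) ^ k * n < (a:ℝ) ^ k := by
      have h0 : (0:ℝ) ≤ (d:ℝ) * (n:ℝ) ^ (1/(k:ℝ)) := by positivity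
      have := pow_lt_pow_left₀ h h0 (by omega : k ≠ 0)
      calc (d:ℝ) ^ k * n = ((d:ℝ) * (n:ℝ) ^ (1/(k:ℝ))) ^ k := by
            rw [mul_pow, ← Real.rpow_natCast ((n:ℝ) ^ (1/(k:ℝ))) k,
              ← Real.rpow_mul (Nat.cast_nonneg n), one_div_mul_cancel hkR, Real.rpow_one]
        _ < (a:ℝ) ^ k := this
    have hpowN : d ^ k * n < a ^ k := by exact_mod_cast hpow
    have key := choose_ineq (d := d) (a := a) k (le_of_lt hda)
    have hcd : 0 < d.choose k := Nat.choose_pos hdk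
    have hstep : n * d.choose k * d ^ k < a.choose k * d ^ k := by
      calc n * d.choose k * d ^ k = d.choose k * (d ^ k * n) := by ring
        _ < d.choose k * a ^ k := (Nat.mul_lt_mul_left hcd).mpr hpowN
        _ ≤ a.choose k * d ^ k := key
    have hdpos : 0 < d ^ k := Nat.pow_pos (by omega)
    exact Nat.lt_of_mul_lt_mul_right hstep

lemma exists_good_subset {α ι : Type*} [DecidableEq α] [DecidableEq ι]
    (A : Finset α) (gE : Finset ι) (F : ι → Finset α) (k n d : ℕ)
    (hgE : gE.card ≤ n)
    (hF : ∀ e ∈ gE, (A ∩ F e).card ≤ d)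
    (hcount : n * d.choose k < A.card.choose k) :
    ∃ T, T ⊆ A ∧ T.card ≤ k ∧ ∀ e ∈ gE, (T \ F e).Nonempty := by
  by_contra hcon
  push_neg at hcon
  have hsub : A.powersetCard k ⊆ gE.biUnion fun e => (A ∩ F e).powersetCard k := by
    intro T hT
    rw [Finset.mem_powersetCard] at hT
    obtain ⟨e, he, hbad⟩ := hcon T hT.1 (le_of_eq hT.2)
    rw [Finset.sdiff_eq_empty_iff_subset] at hbad
    rw [Finset.mem_biUnion]
    exact ⟨e, he, Finset.mem_powersetCard.mpr ⟨Finset.subset_inter hT.1 hbad, hT.2⟩⟩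
  have hcard : A.card.choose k ≤ n * d.choose k := by
    calc A.card.choose k = (A.powersetCard k).card := (Finset.card_powersetCard k A).symm
      _ ≤ (gE.biUnion fun e => (A ∩ F e).powersetCard k).card := Finset.card_le_card hsub
      _ ≤ ∑ e ∈ gE, ((A ∩ F e).powersetCard k).card := Finset.card_biUnion_le
      _ ≤ ∑ _e ∈ gE, d.choose k := by
          apply Finset.sum_le_sum
          intro e he
          rw [Finset.card_powersetCard]
          exact Nat.choose_le_choose k (hF e he)
      _ = gE.card * d.choose k := by rw [Finset.sum_const, smul_eq_mul]
      _ ≤ n * d.choose k := Nat.mul_le_mul_right _ hgE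
  omega



/-- (Key step of the few-colors analysis.)  Let `c` be a valid partial
coloring of a bipartite edge-group instance, defined on a subset `S ⊆ E` of the edges,
let `k ≥ 1`, and let `g` be a group centered at input `u` none of whose edges is
colored.  Suppose every group centered at `u` other than `g` uses at most `k` distinct
colors under `c`, and the total number `C` of distinct colors used by `c` satisfies
`C > (D_i - 1)·k + (Δ_o - 1)·n_o^{1/k}`.  Then `c` extends to a valid partial coloring
of `S` together with the edges of `g` in which every edge of `g` receives a color
already used by `c` and at most `k` distinct colors appear on the edges of `g`. -/
theorem edge_group_coloring_extend_group
    {I O G : Type*} [Fintype I] [Fintype O]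
    [DecidableEq I] [DecidableEq O] [DecidableEq G]
    (E : Finset (I × O)) (grp : I × O → G)
    (hgrp : ∀ e ∈ E, ∀ e' ∈ E, grp e = grp e' → e.1 = e'.1)
    (S : Finset (I × O)) (hSE : S ⊆ E) (c : I × O → ℕ)
    (hvalid : ∀ e ∈ S, ∀ e' ∈ S, e ≠ e' → (e.1 = e'.1 ∨ e.2 = e'.2) →
      grp e ≠ grp e' → c e ≠ c e')
    (k : ℕ) (hk : 1 ≤ k) (g : G) (u : I)
    (hcenter : ∀ e ∈ E, grp e = g → e.1 = u)
    (huncolored : ∀ e ∈ S, grp e ≠ g)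
    (hother : ∀ g' : G, g' ≠ g →
      ((S.filter fun e => e.1 = u ∧ grp e = g').image c).card ≤ k)
    (hC : (((Finset.univ.sup fun u' : I =>
              ((E.filter fun e => e.1 = u').image grp).card : ℕ) : ℝ) - 1) * (k : ℝ) +
          (((Finset.univ.sup fun v : O => (E.filter fun e => e.2 = v).card : ℕ) : ℝ) - 1)
            * ((Fintype.card O : ℝ) ^ (1 / (k : ℝ)))
          < ((S.image c).card : ℝ)) :
    ∃ c' : I × O → ℕ,
      (∀ e ∈ S, c' e = c e) ∧
      (∀ e ∈ S ∪ E.filter fun e => grp e = g,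
        ∀ e' ∈ S ∪ E.filter fun e => grp e = g,
        e ≠ e' → (e.1 = e'.1 ∨ e.2 = e'.2) → grp e ≠ grp e' → c' e ≠ c' e') ∧
      (∀ e ∈ E, grp e = g → c' e ∈ S.image c) ∧
      ((E.filter fun e => grp e = g).image c').card ≤ k := by
  classical
  set Di := (Finset.univ.sup fun u' : I => ((E.filter fun e => e.1 = u').image grp).card : ℕ)
    with hDi
  set Δo := (Finset.univ.sup fun v : O => (E.filter fun e => e.2 = v).card : ℕ) with hΔo
  set n := Fintype.card O with hn
  set gE := E.filter (fun e => grp e = g) with hgEdef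
  rcases Finset.eq_empty_or_nonempty gE with hempty | ⟨e0, he0⟩
  · refine ⟨c, fun e _ => rfl, ?_, ?_, ?_⟩
    · rw [hempty, Finset.union_empty]
      exact hvalid
    · intro e heE hge
      have hmem : e ∈ gE := by rw [hgEdef]; exact Finset.mem_filter.mpr ⟨heE, hge⟩
      rw [hempty] at hmem
      exact absurd hmem (Finset.notMem_empty e)
    · rw [hempty]; simpa using Nat.zero_le k
  · have hgEmem : ∀ e ∈ gE, e ∈ E ∧ grp e = g := fun e he => Finset.mem_filter.mp he
    have hDiu : ∀ u' : I, ((E.filter fun e => e.1 = u').image grp).card ≤ Di := by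
      intro u'
      rw [hDi]
      exact Finset.le_sup (f := fun u' : I => ((E.filter fun e => e.1 = u').image grp).card)
        (Finset.mem_univ u')
    have hΔov : ∀ v : O, (E.filter fun e => e.2 = v).card ≤ Δo := by
      intro v
      rw [hΔo]
      exact Finset.le_sup (f := fun v : O => (E.filter fun e => e.2 = v).card)
        (Finset.mem_univ v)
    obtain ⟨he0E, hge0⟩ := hgEmem e0 he0
    have he0u : e0.1 = u := hcenter e0 he0E hge0
    set U := S.image c with hU
    set Su := S.filter (fun e => e.1 = u) with hSudef
    set Fu := Su.image c with hFudef
    set A := U \ Fu with hAdef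
    have hgmem : g ∈ (E.filter fun e => e.1 = u).image grp :=
      Finset.mem_image.mpr ⟨e0, Finset.mem_filter.mpr ⟨he0E, he0u⟩, hge0⟩
    have hDi1 : 1 ≤ Di :=
      le_trans (Finset.card_pos.mpr ⟨g, hgmem⟩) (hDiu u)
    have hΔo1 : 1 ≤ Δo :=
      le_trans (Finset.card_pos.mpr
        ⟨e0, (Finset.mem_filter.mpr ⟨he0E, rfl⟩ : e0 ∈ E.filter fun e => e.2 = e0.2)⟩)
        (hΔov e0.2)
    have hn1 : 1 ≤ n := by rw [hn]; exact Fintype.card_pos_iff.mpr ⟨e0.2⟩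
    have hSuE : Su ⊆ E.filter (fun e => e.1 = u) := by
      intro e he
      rw [hSudef, Finset.mem_filter] at he
      exact Finset.mem_filter.mpr ⟨hSE he.1, he.2⟩
    set Gset := Su.image grp with hGsetdef
    have hgnot : g ∉ Gset := by
      intro hg
      obtain ⟨e, heSu, hge⟩ := Finset.mem_image.mp hg
      exact huncolored e (Finset.mem_filter.mp heSu).1 hge
    have hGcard : Gset.card ≤ Di - 1 := by
      have hGsub : Gset ⊆ ((E.filter fun e => e.1 = u).image grp).erase g := by
        intro g' hg'
        refine Finset.mem_erase.mpr ⟨?_, Finset.image_subset_image hSuE hg'⟩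
        rintro rfl; exact hgnot hg'
      calc Gset.card ≤ (((E.filter fun e => e.1 = u).image grp).erase g).card :=
            Finset.card_le_card hGsub
        _ = ((E.filter fun e => e.1 = u).image grp).card - 1 := Finset.card_erase_of_mem hgmem
        _ ≤ Di - 1 := Nat.sub_le_sub_right (hDiu u) 1
    have hFuB : Fu.card ≤ (Di - 1) * k := by
      have hsub : Fu ⊆ Gset.biUnion fun g' =>
          (S.filter fun e => e.1 = u ∧ grp e = g').image c := by
        intro x hx
        obtain ⟨e, heSu, rfl⟩ := Finset.mem_image.mp hx
        obtain ⟨heS, heu⟩ := Finset.mem_filter.mp heSu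
        rw [Finset.mem_biUnion]
        exact ⟨grp e, Finset.mem_image.mpr ⟨e, heSu, rfl⟩,
          Finset.mem_image.mpr ⟨e, Finset.mem_filter.mpr ⟨heS, heu, rfl⟩, rfl⟩⟩
      calc Fu.card ≤ (Gset.biUnion fun g' =>
            (S.filter fun e => e.1 = u ∧ grp e = g').image c).card := Finset.card_le_card hsub
        _ ≤ ∑ g' ∈ Gset, ((S.filter fun e => e.1 = u ∧ grp e = g').image c).card :=
            Finset.card_biUnion_le
        _ ≤ ∑ _g' ∈ Gset, k :=
            Finset.sum_le_sum fun g' hg' => hother g' (by rintro rfl; exact hgnot hg')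
        _ = Gset.card * k := by rw [Finset.sum_const, smul_eq_mul]
        _ ≤ (Di - 1) * k := Nat.mul_le_mul_right _ hGcard
    have hFuU : Fu ⊆ U := by
      rw [hFudef, hU]
      exact Finset.image_subset_image (Finset.filter_subset _ _)
    set d := Δo - 1 with hddef
    have hAcard : (d : ℝ) * (n : ℝ) ^ (1/(k:ℝ)) < (A.card : ℝ) := by
      have hAeq : A.card = U.card - Fu.card := by
        rw [hAdef, Finset.card_sdiff, Finset.inter_eq_left.mpr hFuU]
      have hFuUc : Fu.card ≤ U.card := Finset.card_le_card hFuU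
      have hAR : (A.card : ℝ) = (U.card : ℝ) - (Fu.card : ℝ) := by
        rw [hAeq, Nat.cast_sub hFuUc]
      have h1 : (Fu.card : ℝ) ≤ ((Di : ℝ) - 1) * k := by
        have h2 : ((Di - 1) * k : ℕ) = ((Di : ℝ) - 1) * k := by
          push_cast [Nat.cast_sub hDi1]; ring
        calc (Fu.card : ℝ) ≤ (((Di - 1) * k : ℕ) : ℝ) := by exact_mod_cast hFuB
          _ = ((Di : ℝ) - 1) * k := h2
      have hdR : ((d : ℕ) : ℝ) = (Δo : ℝ) - 1 := by
        rw [hddef]; push_cast [Nat.cast_sub hΔo1]; ring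
      rw [hdR, hAR]
      linarith [hC]
    set F : I × O → Finset ℕ := fun e => (S.filter fun e' => e'.2 = e.2).image c with hFdef
    have hFd : ∀ e ∈ gE, (A ∩ F e).card ≤ d := by
      intro e he
      obtain ⟨heE, hge⟩ := hgEmem e he
      have heS : e ∉ S := fun hS => huncolored e hS hge
      have hsub : S.filter (fun e' => e'.2 = e.2) ⊆ (E.filter fun e' => e'.2 = e.2).erase e := by
        intro e' he'
        rw [Finset.mem_filter] at he'
        exact Finset.mem_erase.mpr ⟨fun h => heS (h ▸ he'.1),
          Finset.mem_filter.mpr ⟨hSE he'.1, he'.2⟩⟩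
      calc (A ∩ F e).card ≤ (F e).card := Finset.card_le_card Finset.inter_subset_right
        _ ≤ (S.filter fun e' => e'.2 = e.2).card := Finset.card_image_le
        _ ≤ ((E.filter fun e' => e'.2 = e.2).erase e).card := Finset.card_le_card hsub
        _ = (E.filter fun e' => e'.2 = e.2).card - 1 :=
            Finset.card_erase_of_mem (Finset.mem_filter.mpr ⟨heE, rfl⟩)
        _ ≤ Δo - 1 := Nat.sub_le_sub_right (hΔov e.2) 1
    have hgEn : gE.card ≤ n := by
      have hinj : Set.InjOn Prod.snd (↑gE : Set (I × O)) := by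
        intro x hx y hy hxy
        have hx' := hgEmem x (Finset.mem_coe.mp hx)
        have hy' := hgEmem y (Finset.mem_coe.mp hy)
        exact Prod.ext ((hcenter x hx'.1 hx'.2).trans (hcenter y hy'.1 hy'.2).symm) hxy
      calc gE.card = (gE.image Prod.snd).card := (Finset.card_image_of_injOn hinj).symm
        _ ≤ Finset.univ.card := Finset.card_le_univ _
        _ = n := Finset.card_univ
    obtain ⟨T, hTA, hTk, hTgood⟩ :
        ∃ T, T ⊆ A ∧ T.card ≤ k ∧ ∀ e ∈ gE, (T \ F e).Nonempty := by
      rcases le_or_gt k A.card with hka | hka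
      · exact exists_good_subset A gE F k n d hgEn hFd (count_ineq hk hka hn1 hAcard)
      · refine ⟨A, Finset.Subset.refl A, le_of_lt hka, fun e he => ?_⟩
        have hdlt : d < A.card := by
          have h1 : (1:ℝ) ≤ (n:ℝ) ^ (1/(k:ℝ)) :=
            Real.one_le_rpow (by exact_mod_cast hn1) (by positivity)
          have h2 : (d:ℝ) < (A.card:ℝ) := by nlinarith [Nat.cast_nonneg (α := ℝ) d]
          exact_mod_cast h2
        rw [← Finset.card_pos]
        have h3 := Finset.card_sdiff_add_card_inter A (F e)
        have h4 := hFd e he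
        omega
    set c' : I × O → ℕ :=
      fun e => if h : e ∈ gE then (T \ F e).min' (hTgood e h) else c e with hc'def
    have hSnotgE : ∀ e ∈ S, e ∉ gE := fun e he hgE' =>
      huncolored e he (Finset.mem_filter.mp hgE').2
    have hc'S : ∀ e ∈ S, c' e = c e := by
      intro e he
      rw [hc'def]
      exact dif_neg (hSnotgE e he)
    have hc'g : ∀ e ∈ gE, c' e ∈ T \ F e := by
      intro e he
      rw [hc'def]
      simp only [dif_pos he]
      exact Finset.min'_mem _ _
    have hTU : T ⊆ U := fun x hx => (Finset.mem_sdiff.mp (hTA hx)).1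
    have hcross : ∀ e ∈ S, ∀ e' ∈ gE, (e.1 = e'.1 ∨ e.2 = e'.2) → c e ≠ c' e' := by
      intro e he e' he' hshare
      have hm := Finset.mem_sdiff.mp (hc'g e' he')
      rcases hshare with h1 | h2
      · have hu : e'.1 = u := hcenter e' (hgEmem e' he').1 (hgEmem e' he').2
        have hceFu : c e ∈ Fu :=
          Finset.mem_image.mpr ⟨e, Finset.mem_filter.mpr ⟨he, h1.trans hu⟩, rfl⟩
        have hnot : c' e' ∉ Fu := (Finset.mem_sdiff.mp (hTA hm.1)).2
        exact fun hEq => hnot (hEq ▸ hceFu)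
      · have hceF : c e ∈ F e' :=
          Finset.mem_image.mpr ⟨e, Finset.mem_filter.mpr ⟨he, h2⟩, rfl⟩
        exact fun hEq => hm.2 (hEq ▸ hceF)
    refine ⟨c', hc'S, ?_, ?_, ?_⟩
    · intro e he e' he' hne hshare hgne
      rw [Finset.mem_union] at he he'
      rcases he with heS | hegE <;> rcases he' with he'S | he'gE
      · rw [hc'S e heS, hc'S e' he'S]
        exact hvalid e heS e' he'S hne hshare hgne
      · rw [hc'S e heS]
        exact hcross e heS e' he'gE hshare
      · rw [hc'S e' he'S]
        exact (hcross e' he'S e hegE (hshare.imp Eq.symm Eq.symm)).symm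
      · exact absurd ((hgEmem e hegE).2.trans (hgEmem e' he'gE).2.symm) hgne
    · intro e heE hge
      exact hTU (Finset.mem_sdiff.mp (hc'g e (Finset.mem_filter.mpr ⟨heE, hge⟩))).1
    · calc (gE.image c').card ≤ T.card := Finset.card_le_card (fun x hx => by
            obtain ⟨e, he, rfl⟩ := Finset.mem_image.mp hx
            exact (Finset.mem_sdiff.mp (hc'g e he)).1)
        _ ≤ k := hTk
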